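/- Fix h : ℕ, k ≥ 1, and intervals x_1, …, x_k with x_j = {m ∈ ℕ : a_j ≤ m < b_j} where a_j < b_j ≤ 2^h. Then ⋂_{j ∈ [k]} x_j ≠ ∅ if and only if there exist a permutation σ of [k] and bitstrings u_1, …, u_k such that: u_j is a prefix of u_{j+1} for every 1 ≤ j < k; u_j ∈ CP_h(a_{σ(j)}, b_{σ(j)}) for every 1 ≤ j ≤ k − 1; and u_k has length h with val(u_k) = a_{σ(k)}. -/

import Mathlib

/-- The value of a bitstring (most significant bit first):
`val [] = 0` and `val (u ++ [b]) = 2 * val u + (if b then 1 else 0)`. -/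
def bitVal (u : List Bool) : ℕ :=
  u.foldl (fun n b => 2 * n + (if b then 1 else 0)) 0

/-- The segment of a bitstring `u` (with `|u| ≤ h`) in the perfect segment tree of
height `h`: `seg_h(u) = {m : val u · 2^(h−|u|) ≤ m < (val u + 1) · 2^(h−|u|)}`. -/
def seg (h : ℕ) (u : List Bool) : Set ℕ :=
  {m | bitVal u * 2 ^ (h - u.length) ≤ m ∧ m < (bitVal u + 1) * 2 ^ (h - u.length)}

/-- The canonical partition `CP_h(a, b)` of the interval `{m : a ≤ m < b}` in the
perfect segment tree of height `h`: the bitstrings `u` with `|u| ≤ h` whose segment is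
contained in `[a, b)` and such that no proper prefix of `u` has its segment contained
in `[a, b)`. -/
def CP (h a b : ℕ) : Set (List Bool) :=
  {u | u.length ≤ h ∧ seg h u ⊆ Set.Ico a b ∧
    ∀ u' : List Bool, u' <+: u → u' ≠ u → ¬ seg h u' ⊆ Set.Ico a b}

private lemma foldl_bit (v : List Bool) (x : ℕ) :
    v.foldl (fun n b => 2 * n + (if b then 1 else 0)) x
      = x * 2 ^ v.length + v.foldl (fun n b => 2 * n + (if b then 1 else 0)) 0 := by
  induction v generalizing x with
  | nil => simp
  | cons c v ih =>
    simp only [List.foldl_cons, List.length_cons]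
    rw [ih (2 * x + _), ih (2 * 0 + _)]
    ring

lemma bitVal_lt (v : List Bool) : bitVal v < 2 ^ v.length := by
  induction v with
  | nil => simp [bitVal]
  | cons c v ih =>
    unfold bitVal at *
    simp only [List.foldl_cons, List.length_cons]
    rw [foldl_bit, pow_succ]
    have : (if c then 1 else 0) ≤ 1 := by split <;> simp
    nlinarith

lemma bitVal_append (u v : List Bool) :
    bitVal (u ++ v) = bitVal u * 2 ^ v.length + bitVal v := by
  unfold bitVal
  rw [List.foldl_append, foldl_bit]

lemma seg_mono {h : ℕ} {u' u : List Bool} (hu : u.length ≤ h) (hp : u' <+: u) :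
    seg h u ⊆ seg h u' := by
  obtain ⟨t, rfl⟩ := hp
  intro m hm
  obtain ⟨h1, h2⟩ := hm
  simp only [seg, Set.mem_setOf_eq, bitVal_append, List.length_append] at *
  have hT : bitVal t < 2 ^ t.length := bitVal_lt t
  have he : h - u'.length = (h - (u'.length + t.length)) + t.length := by omega
  rw [he, pow_add]
  have hpos : 0 < 2 ^ (h - (u'.length + t.length)) := Nat.pow_pos (by norm_num)
  constructor
  · nlinarith
  · nlinarith

def leafStr : ℕ → ℕ → List Bool
  | 0, _ => []
  | n+1, m => leafStr n (m / 2) ++ [decide (m % 2 = 1)]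

lemma leafStr_length (n m : ℕ) : (leafStr n m).length = n := by
  induction n generalizing m with
  | zero => simp [leafStr]
  | succ n ih => simp [leafStr, ih]

lemma bitVal_leafStr (n m : ℕ) (hm : m < 2 ^ n) : bitVal (leafStr n m) = m := by
  induction n generalizing m with
  | zero => interval_cases m; simp [leafStr, bitVal]
  | succ n ih =>
    have h2 : 2 ^ (n + 1) = 2 * 2 ^ n := by ring
    rw [leafStr, bitVal_append, ih (m / 2) (by omega)]
    simp only [bitVal, List.foldl_cons, List.foldl_nil, List.length_singleton, pow_one]
    rcases Nat.mod_two_eq_zero_or_one m with hmod | hmod <;> simp [hmod] <;> omega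

lemma mem_seg_leaf {h : ℕ} {w : List Bool} (hw : w.length = h) {x : ℕ} :
    x ∈ seg h w ↔ x = bitVal w := by
  simp [seg, hw, Nat.sub_self]
  omega

set_option maxHeartbeats 2000000 in
/-- (Intersection Predicate Rewriting 2, dyadic form.) Fix `h`,
`k ≥ 1`, and intervals `x j = {m : a j ≤ m < b j}` with `a j < b j ≤ 2^h`. Then
`⋂ j, x j ≠ ∅` iff there exist a permutation `σ` of `{0, …, k−1}` and bitstrings
`u 0, …, u (k−1)` such that each `u j` is a prefix of `u (j+1)`, each `u j` with
`j < k − 1` belongs to `CP_h(a (σ j), b (σ j))`, and the last bitstring `u (k−1)` is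
a leaf (length `h`) with value `a (σ (k−1))`. -/
theorem intersection_nonempty_iff_ordered_chain
    (h k : ℕ) (hk : 1 ≤ k) (a b : Fin k → ℕ)
    (hab : ∀ j, a j < b j) (hb : ∀ j, b j ≤ 2 ^ h) :
    (⋂ j, Set.Ico (a j) (b j)).Nonempty ↔
      ∃ (σ : Equiv.Perm (Fin k)) (u : Fin k → List Bool),
        (∀ j : ℕ, (hj : j + 1 < k) →
          u ⟨j, by omega⟩ <+: u ⟨j + 1, hj⟩) ∧
        (∀ j : ℕ, (hj : j + 1 < k) →
          u ⟨j, by omega⟩ ∈ CP h (a (σ ⟨j, by omega⟩)) (b (σ ⟨j, by omega⟩))) ∧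
        (u ⟨k - 1, by omega⟩).length = h ∧
        bitVal (u ⟨k - 1, by omega⟩) = a (σ ⟨k - 1, by omega⟩) := by
  classical
  constructor
  · rintro ⟨t, ht⟩
    simp only [Set.mem_iInter, Set.mem_Ico] at ht
    have hne : Nonempty (Fin k) := ⟨⟨0, hk⟩⟩
    obtain ⟨j₀, hj₀⟩ := Finite.exists_max a
    set m := a j₀ with hm
    have hmlt : m < 2 ^ h := lt_of_lt_of_le (hab j₀) (hb j₀)
    set w := leafStr h m with hw
    have hwlen : w.length = h := leafStr_length h m
    have hwval : bitVal w = m := bitVal_leafStr h m hmlt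
    have hmem : ∀ i, m ∈ Set.Ico (a i) (b i) := fun i =>
      ⟨hj₀ i, lt_of_le_of_lt ((ht j₀).1) ((ht i).2)⟩
    have hPex : ∀ j : Fin k, ∃ n, seg h (w.take n) ⊆ Set.Ico (a j) (b j) := by
      intro j
      refine ⟨h, ?_⟩
      have htk : w.take h = w := by rw [← hwlen]; exact List.take_length
      rw [htk]
      intro x hx
      rw [mem_seg_leaf hwlen] at hx
      rw [hx, hwval]
      exact hmem j
    set d : Fin k → ℕ := fun j => Nat.find (hPex j) with hd
    have hdspec : ∀ j, seg h (w.take (d j)) ⊆ Set.Ico (a j) (b j) := fun j =>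
      Nat.find_spec (hPex j)
    have hdle : ∀ j, d j ≤ h := by
      intro j
      apply Nat.find_le
      have htk : w.take h = w := by rw [← hwlen]; exact List.take_length
      rw [htk]
      intro x hx
      rw [mem_seg_leaf hwlen] at hx
      rw [hx, hwval]
      exact hmem j
    have hCPmem : ∀ j : Fin k, w.take (d j) ∈ CP h (a j) (b j) := by
      intro j
      refine ⟨?_, hdspec j, ?_⟩
      · rw [List.length_take]
        exact le_trans (min_le_right _ _) hwlen.le
      · intro u' hpre hne' hsub
        have hlen' : u'.length ≤ d j := by
          have := hpre.length_le
          rw [List.length_take, hwlen] at this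
          omega
        have h0 : u' = (w.take (d j)).take u'.length := List.prefix_iff_eq_take.mp hpre
        have h1 : u' = w.take u'.length := by
          conv_lhs => rw [h0]
          rw [List.take_take, min_eq_left hlen']
        have h2 : u'.length < d j := by
          rcases lt_or_eq_of_le hlen' with hlt | heq
          · exact hlt
          · exact absurd (by rw [h1, heq]) hne'
        exact Nat.find_min (hPex j) h2 (h1 ▸ hsub)
    clear_value d
    set key : Fin k → ℕ := fun j => if j = j₀ then h + 1 else d j with hkey
    have hkeyeq : ∀ x, x ≠ j₀ → key x = d x := fun x hx => if_neg hx
    have hkeyj₀ : key j₀ = h + 1 := if_pos rfl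
    clear_value key
    set σ := Tuple.sort key with hσ
    have hmono : Monotone (key ∘ σ) := Tuple.monotone_sort key
    clear_value σ
    set last : Fin k := ⟨k - 1, by omega⟩ with hlast
    have hle_last : ∀ i : Fin k, i ≤ last := by
      intro i
      rw [Fin.le_def]
      have := i.isLt
      simp only [hlast]
      omega
    have hσlast : σ last = j₀ := by
      by_contra hcon
      have h1 : key (σ (σ.symm j₀)) ≤ key (σ last) := hmono (hle_last _)
      rw [Equiv.apply_symm_apply] at h1
      have h3 : key (σ last) = d (σ last) := hkeyeq _ hcon
      have := hdle (σ last)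
      omega
    have hσne : ∀ jj : Fin k, (jj : ℕ) ≠ k - 1 → σ jj ≠ j₀ := by
      intro jj hjj hcon
      apply hjj
      have heq : jj = last := σ.injective (hcon.trans hσlast.symm)
      rw [heq]
    refine ⟨σ, fun j => if (j : ℕ) = k - 1 then w else w.take (d (σ j)), ?_, ?_, ?_, ?_⟩
    · intro j hj
      have hjne : j ≠ k - 1 := by omega
      simp only [hjne, if_false]
      by_cases hj1 : j + 1 = k - 1
      · simp only [hj1, if_true]
        exact List.take_prefix _ _
      · simp only [hj1, if_false]
        have hmle : d (σ ⟨j, by omega⟩) ≤ d (σ ⟨j + 1, hj⟩) := by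
          have hmo := hmono (show (⟨j, by omega⟩ : Fin k) ≤ ⟨j + 1, hj⟩ from
            Fin.mk_le_mk.mpr (by omega))
          have e1 : key (σ ⟨j, by omega⟩) = d (σ ⟨j, by omega⟩) :=
            hkeyeq _ (hσne _ (show j ≠ k - 1 from hjne))
          have e2 : key (σ ⟨j + 1, hj⟩) = d (σ ⟨j + 1, hj⟩) :=
            hkeyeq _ (hσne _ (show j + 1 ≠ k - 1 from hj1))
          simpa [Function.comp, e1, e2] using hmo
        have heq2 : w.take (d (σ ⟨j, by omega⟩))
            = (w.take (d (σ ⟨j + 1, hj⟩))).take (d (σ ⟨j, by omega⟩)) := by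
          rw [List.take_take, min_eq_left hmle]
        rw [heq2]
        exact List.take_prefix _ _
    · intro j hj
      have hjne : j ≠ k - 1 := by omega
      simp only [hjne, if_false]
      exact hCPmem _
    · simp only [if_pos (show (last : ℕ) = k - 1 from rfl)]
      exact hwlen
    · simp only [if_pos (show (last : ℕ) = k - 1 from rfl)]
      rw [hwval]
      have hx : σ ⟨k - 1, by omega⟩ = j₀ := hσlast
      rw [hx]
  · rintro ⟨σ, u, hchain, hCP, hlen, hval⟩
    set last : Fin k := ⟨k - 1, by omega⟩ with hlast
    set m := bitVal (u last) with hm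
    have hchain' : ∀ i j : ℕ, (hji : j + i = k - 1) → (hj : j < k) →
        u ⟨j, hj⟩ <+: u last := by
      intro i
      induction i with
      | zero =>
        intro j hji hj
        have : (⟨j, hj⟩ : Fin k) = last := by
          simp only [hlast, Fin.mk.injEq]; omega
        rw [this]
      | succ i ih =>
        intro j hji hj
        have hj1 : j + 1 < k := by omega
        exact (hchain j hj1).trans (ih (j + 1) (by omega) hj1)
    refine ⟨m, ?_⟩
    simp only [Set.mem_iInter, Set.mem_Ico]
    intro i
    set j : Fin k := σ.symm i with hj
    have hij : σ j = i := σ.apply_symm_apply i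
    have hm_self : m ∈ seg h (u last) := (mem_seg_leaf hlen).mpr rfl
    by_cases hjk : (j : ℕ) = k - 1
    · have hjl : j = last := by
        apply Fin.ext
        simp [hlast, hjk]
      have hai : a i = m := by
        rw [← hij, hjl, ← hval]
      constructor
      · omega
      · have := hab i; omega
    · have hjlt : (j : ℕ) + 1 < k := by
        have := j.isLt
        omega
      have hCPj := hCP (j : ℕ) hjlt
      have hjeq : (⟨(j : ℕ), by omega⟩ : Fin k) = j := Fin.ext rfl
      rw [hjeq, hij] at hCPj
      obtain ⟨_, hsub, _⟩ := hCPj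
      have hpre : u j <+: u last := by
        have hc := hchain' (k - 1 - (j : ℕ)) (j : ℕ) (by omega) (by omega)
        rwa [hjeq] at hc
      exact hsub (seg_mono hlen.le hpre hm_self)
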